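/- Let γ : [0, τ] → S be a smooth curve on the sphere S of radius r > 0 centered at the origin in a finite-dimensional real inner product space. Then τ · (1/τ) ∫₀^τ ‖γ'(t)‖ dt ≥ r · arccos(⟨γ(0), γ(τ)⟩ / r²); i.e., the length of γ is at least the geodesic (great-circle) distance between its endpoints. -/

import Mathlib

open scoped InnerProductSpace
open Real InnerProductGeometry

section Aux

variable {E : Type*} [NormedAddCommGroup E] [InnerProductSpace ℝ E]

lemma arccos_le_arccos_aux {a b : ℝ} (h : a ≤ b) : Real.arccos b ≤ Real.arccos a := by
  rw [Real.arccos, Real.arccos]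
  have := Real.monotone_arcsin h
  linarith

/-- Triangle inequality for the unoriented angle. -/
lemma angle_triangle_aux {x y z : E} (hx : x ≠ 0) (hy : y ≠ 0) (hz : z ≠ 0) :
    angle x z ≤ angle x y + angle y z := by
  set α := angle x y with hα
  set β := angle y z with hβ
  have hα0 : 0 ≤ α := angle_nonneg x y
  have hβ0 : 0 ≤ β := angle_nonneg y z
  rcases le_or_gt π (α + β) with h | h
  · exact (angle_le_pi x z).trans h
  -- main case
  have hnx : (0:ℝ) < ‖x‖ := norm_pos_iff.2 hx
  have hny : (0:ℝ) < ‖y‖ := norm_pos_iff.2 hy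
  have hnz : (0:ℝ) < ‖z‖ := norm_pos_iff.2 hz
  set p : ℝ := ⟪x, y⟫_ℝ / ‖y‖ ^ 2 with hp
  set q : ℝ := ⟪z, y⟫_ℝ / ‖y‖ ^ 2 with hq
  set u : E := x - p • y with hu
  set v : E := z - q • y with hv
  have hyy : ⟪y, y⟫_ℝ = ‖y‖ ^ 2 := real_inner_self_eq_norm_sq y
  have hxx : ⟪x, x⟫_ℝ = ‖x‖ ^ 2 := real_inner_self_eq_norm_sq x
  have hzz : ⟪z, z⟫_ℝ = ‖z‖ ^ 2 := real_inner_self_eq_norm_sq z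
  have hny2 : ‖y‖ ^ 2 ≠ 0 := by positivity
  have huy : ⟪u, y⟫_ℝ = 0 := by
    simp only [hu, inner_sub_left, real_inner_smul_left, hyy, hp]
    field_simp
    ring
  have hvy : ⟪v, y⟫_ℝ = 0 := by
    simp only [hv, inner_sub_left, real_inner_smul_left, hyy, hq]
    field_simp
    ring
  have hxz : ⟪x, z⟫_ℝ = p * q * ‖y‖ ^ 2 + ⟪u, v⟫_ℝ := by
    have hx' : x = p • y + u := by simp [hu]
    have hz' : z = q • y + v := by simp [hv]
    calc ⟪x, z⟫_ℝ = ⟪p • y + u, q • y + v⟫_ℝ := by rw [← hx', ← hz']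
      _ = p * (q * ⟪y, y⟫_ℝ) + p * ⟪y, v⟫_ℝ + (q * ⟪u, y⟫_ℝ + ⟪u, v⟫_ℝ) := by
          simp only [inner_add_left, inner_add_right, real_inner_smul_left,
            real_inner_smul_right]
          ring
      _ = _ := by rw [real_inner_comm v y, hvy, huy, hyy]; ring
  have hcosα : Real.cos α = ⟪x, y⟫_ℝ / (‖x‖ * ‖y‖) := cos_angle x y
  have hcosβ : Real.cos β = ⟪y, z⟫_ℝ / (‖y‖ * ‖z‖) := cos_angle y z
  have hsinα : Real.sin α ^ 2 = 1 - Real.cos α ^ 2 := Real.sin_sq α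
  have hsinβ : Real.sin β ^ 2 = 1 - Real.cos β ^ 2 := Real.sin_sq β
  have hsinα0 : 0 ≤ Real.sin α := Real.sin_nonneg_of_nonneg_of_le_pi hα0 (angle_le_pi x y)
  have hsinβ0 : 0 ≤ Real.sin β := Real.sin_nonneg_of_nonneg_of_le_pi hβ0 (angle_le_pi y z)
  have hnu : ‖u‖ ^ 2 = ‖x‖ ^ 2 * Real.sin α ^ 2 := by
    have h1 : ‖u‖ ^ 2 = ⟪u, u⟫_ℝ := (real_inner_self_eq_norm_sq u).symm
    have h2 : ⟪u, u⟫_ℝ = ⟪x, x⟫_ℝ - p * ⟪x, y⟫_ℝ := by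
      have : ⟪u, u⟫_ℝ = ⟪u, x⟫_ℝ - p * ⟪u, y⟫_ℝ := by
        simp only [hu, inner_sub_right, real_inner_smul_right]
      rw [this, huy, real_inner_comm x u]
      simp only [hu, inner_sub_right, real_inner_smul_right, real_inner_comm y x]
      ring
    rw [h1, h2, hp, hsinα, hcosα, hxx]
    field_simp
  have hnv : ‖v‖ ^ 2 = ‖z‖ ^ 2 * Real.sin β ^ 2 := by
    have h1 : ‖v‖ ^ 2 = ⟪v, v⟫_ℝ := (real_inner_self_eq_norm_sq v).symm
    have h2 : ⟪v, v⟫_ℝ = ⟪z, z⟫_ℝ - q * ⟪z, y⟫_ℝ := by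
      have : ⟪v, v⟫_ℝ = ⟪v, z⟫_ℝ - q * ⟪v, y⟫_ℝ := by
        simp only [hv, inner_sub_right, real_inner_smul_right]
      rw [this, hvy, real_inner_comm z v]
      simp only [hv, inner_sub_right, real_inner_smul_right, real_inner_comm y z]
      ring
    rw [h1, h2, hq, hsinβ, hcosβ, hzz, real_inner_comm z y]
    field_simp
  have hnu' : ‖u‖ = ‖x‖ * Real.sin α := by
    have h3 : ‖u‖ ^ 2 = (‖x‖ * Real.sin α) ^ 2 := by rw [hnu]; ring
    have h4 := congrArg Real.sqrt h3
    rwa [Real.sqrt_sq (norm_nonneg u), Real.sqrt_sq (mul_nonneg hnx.le hsinα0)] at h4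
  have hnv' : ‖v‖ = ‖z‖ * Real.sin β := by
    have h3 : ‖v‖ ^ 2 = (‖z‖ * Real.sin β) ^ 2 := by rw [hnv]; ring
    have h4 := congrArg Real.sqrt h3
    rwa [Real.sqrt_sq (norm_nonneg v), Real.sqrt_sq (mul_nonneg hnz.le hsinβ0)] at h4
  have hCS : -(‖u‖ * ‖v‖) ≤ ⟪u, v⟫_ℝ := by
    have := abs_real_inner_le_norm u v
    cases' abs_le.mp this with h1 h2
    linarith
  have key : ‖x‖ * ‖z‖ * Real.cos (α + β) ≤ ⟪x, z⟫_ℝ := by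
    rw [Real.cos_add, hxz]
    have hpq : p * q * ‖y‖ ^ 2 = (‖x‖ * Real.cos α) * (‖z‖ * Real.cos β) := by
      rw [hcosα, hcosβ, hp, hq, real_inner_comm z y]
      field_simp
    rw [hpq]
    have h5 : -(‖x‖ * Real.sin α * (‖z‖ * Real.sin β)) ≤ ⟪u, v⟫_ℝ := by
      rw [← hnu', ← hnv']
      exact hCS
    nlinarith [h5]
  -- conclude
  have hq1 : ⟪x, z⟫_ℝ / (‖x‖ * ‖z‖) ≥ Real.cos (α + β) := by
    rw [ge_iff_le, le_div_iff₀ (by positivity)]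
    linarith [key]
  calc angle x z = Real.arccos (⟪x, z⟫_ℝ / (‖x‖ * ‖z‖)) := rfl
    _ ≤ Real.arccos (Real.cos (α + β)) := arccos_le_arccos_aux hq1
    _ = α + β := Real.arccos_cos (by linarith) h.le

/-- Chord-angle comparison: if two points of the sphere of radius `r` are at distance
at most `2 r δ`, then the angle is at most the chord divided by `r * √(1 - δ²)`. -/
lemma angle_le_chord {x y : E} {r δ : ℝ} (hr : 0 < r) (hx : ‖x‖ = r) (hy : ‖y‖ = r)
    (hδ0 : 0 ≤ δ) (hδ : δ < 1) (hc : ‖x - y‖ ≤ 2 * r * δ) :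
    angle x y * (r * Real.sqrt (1 - δ ^ 2)) ≤ ‖x - y‖ := by
  set θ := angle x y with hθ
  have hθ0 : 0 ≤ θ := angle_nonneg x y
  have hθπ : θ ≤ π := angle_le_pi x y
  have hcosθ : Real.cos θ = ⟪x, y⟫_ℝ / r ^ 2 := by
    rw [hθ, cos_angle, hx, hy]; ring_nf
  have hchord : ‖x - y‖ ^ 2 = 2 * r ^ 2 * (1 - Real.cos θ) := by
    rw [norm_sub_sq_real, hx, hy, hcosθ]
    field_simp
    ring
  set v := θ / 2 with hv
  have hv0 : 0 ≤ v := by positivity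
  have hvπ : v ≤ π / 2 := by rw [hv]; linarith
  have hsinv0 : 0 ≤ Real.sin v := Real.sin_nonneg_of_nonneg_of_le_pi hv0 (by linarith [Real.pi_pos])
  have hcosv0 : 0 ≤ Real.cos v := Real.cos_nonneg_of_mem_Icc ⟨by linarith [Real.pi_pos], hvπ⟩
  have hsinv_sq : Real.sin v ^ 2 = (1 - Real.cos θ) / 2 := by
    have h2v : θ = 2 * v := by rw [hv]; ring
    rw [h2v, Real.cos_two_mul]
    have := Real.sin_sq_add_cos_sq v
    linarith
  have hsinv : 2 * r * Real.sin v = ‖x - y‖ := by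
    have hsq : (2 * r * Real.sin v) ^ 2 = ‖x - y‖ ^ 2 := by
      rw [hchord]; nlinarith [hsinv_sq]
    nlinarith [norm_nonneg (x - y), mul_nonneg (by positivity : (0:ℝ) ≤ 2 * r) hsinv0]
  have hsinvδ : Real.sin v ≤ δ := by nlinarith [hsinv]
  -- sin v ≥ v * cos v
  have htan : v * Real.cos v ≤ Real.sin v := by
    rcases eq_or_lt_of_le hv0 with h0 | h0
    · simp [← h0]
    rcases eq_or_lt_of_le hvπ with hπ2 | hπ2
    · rw [hπ2, Real.cos_pi_div_two]
      simpa using hsinv0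
    · have h1 : v < Real.tan v := Real.lt_tan h0 hπ2
      have hcosv_pos : 0 < Real.cos v := Real.cos_pos_of_mem_Ioo ⟨by linarith [Real.pi_pos], hπ2⟩
      rw [Real.tan_eq_sin_div_cos] at h1
      calc v * Real.cos v ≤ Real.sin v / Real.cos v * Real.cos v :=
            mul_le_mul_of_nonneg_right h1.le hcosv_pos.le
        _ = Real.sin v := by field_simp
  -- cos v ≥ √(1 - δ²)
  have hδsq : 1 - δ ^ 2 ≤ Real.cos v ^ 2 := by
    have := Real.sin_sq_add_cos_sq v
    nlinarith [hsinvδ, hsinv0]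
  have hsqrt : Real.sqrt (1 - δ ^ 2) ≤ Real.cos v := by
    calc Real.sqrt (1 - δ ^ 2) ≤ Real.sqrt (Real.cos v ^ 2) := Real.sqrt_le_sqrt hδsq
      _ = Real.cos v := Real.sqrt_sq hcosv0
  -- combine
  have h1 : v * Real.sqrt (1 - δ ^ 2) ≤ Real.sin v := by
    calc v * Real.sqrt (1 - δ ^ 2) ≤ v * Real.cos v :=
          mul_le_mul_of_nonneg_left hsqrt hv0
      _ ≤ Real.sin v := htan
  calc θ * (r * Real.sqrt (1 - δ ^ 2)) = 2 * r * (v * Real.sqrt (1 - δ ^ 2)) := by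
        rw [hv]; ring
    _ ≤ 2 * r * Real.sin v := by
        apply mul_le_mul_of_nonneg_left h1 (by positivity)
    _ = ‖x - y‖ := hsinv

end Aux

theorem stmt_6 {E : Type*} [NormedAddCommGroup E] [InnerProductSpace ℝ E]
    [FiniteDimensional ℝ E] (τ r : ℝ) (hτ : 0 < τ) (hr : 0 < r)
    (γ γ' : ℝ → E)
    (hderiv : ∀ t ∈ Set.Icc (0 : ℝ) τ, HasDerivAt γ (γ' t) t)
    (hcont : ContinuousOn γ' (Set.Icc (0 : ℝ) τ))
    (hsphere : ∀ t ∈ Set.Icc (0 : ℝ) τ, ‖γ t‖ = r) :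
    τ * ((1 / τ) * ∫ t in (0 : ℝ)..τ, ‖γ' t‖) ≥
      r * Real.arccos (⟪γ 0, γ τ⟫_ℝ / r ^ 2) := by
  set I := ∫ t in (0 : ℝ)..τ, ‖γ' t‖ with hI
  have hmem0 : (0:ℝ) ∈ Set.Icc (0:ℝ) τ := ⟨le_refl 0, hτ.le⟩
  have hmemτ : τ ∈ Set.Icc (0:ℝ) τ := ⟨hτ.le, le_refl τ⟩
  have hγne : ∀ t ∈ Set.Icc (0:ℝ) τ, γ t ≠ 0 := by
    intro t ht h0
    have := hsphere t ht
    rw [h0, norm_zero] at this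
    exact absurd this.symm (ne_of_gt hr)
  -- reduce to angle
  have hangle : Real.arccos (⟪γ 0, γ τ⟫_ℝ / r ^ 2) = angle (γ 0) (γ τ) := by
    rw [angle, hsphere 0 hmem0, hsphere τ hmemτ]
    ring_nf
  rw [ge_iff_le, hangle]
  have hτne : τ ≠ 0 := ne_of_gt hτ
  have hgoal_eq : τ * ((1 / τ) * I) = I := by field_simp
  rw [hgoal_eq]
  -- chord ≤ arclength on subintervals
  have chord_le : ∀ s t : ℝ, 0 ≤ s → s ≤ t → t ≤ τ →
      ‖γ t - γ s‖ ≤ ∫ u in s..t, ‖γ' u‖ := by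
    intro s t hs hst ht
    have hsub : Set.uIcc s t ⊆ Set.Icc (0:ℝ) τ := by
      rw [Set.uIcc_of_le hst]
      exact Set.Icc_subset_Icc hs ht
    have hint : IntervalIntegrable γ' MeasureTheory.volume s t := by
      apply ContinuousOn.intervalIntegrable
      exact hcont.mono hsub
    have hftc : ∫ u in s..t, γ' u = γ t - γ s :=
      intervalIntegral.integral_eq_sub_of_hasDerivAt (fun u hu => hderiv u (hsub hu)) hint
    rw [← hftc]
    exact intervalIntegral.norm_integral_le_integral_norm hst
  -- get a bound M for ‖γ'‖
  obtain ⟨M, hM⟩ := (isCompact_Icc : IsCompact (Set.Icc (0:ℝ) τ)).exists_bound_of_continuousOn hcont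
  have hM0 : 0 ≤ M := le_trans (norm_nonneg _) (hM 0 hmem0)
  -- I ≥ 0
  have hInonneg : 0 ≤ I := by
    rw [hI]
    apply intervalIntegral.integral_nonneg hτ.le
    intro u _
    exact norm_nonneg _
  -- key estimate for each δ ∈ (0,1)
  have key : ∀ δ : ℝ, 0 < δ → δ < 1 →
      r * angle (γ 0) (γ τ) * Real.sqrt (1 - δ ^ 2) ≤ I := by
    intro δ hδ0 hδ1
    -- choose n with M * τ ≤ n * (2 r δ)
    obtain ⟨n, hn⟩ := exists_nat_ge (M * τ / (2 * r * δ))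
    set N := n + 1 with hN
    have hNpos : 0 < (N:ℝ) := by rw [hN]; push_cast; positivity
    have hn' : M * τ ≤ (N:ℝ) * (2 * r * δ) := by
      rw [div_le_iff₀ (by positivity)] at hn
      rw [hN]
      push_cast
      nlinarith [hn]
    -- partition points
    set a : ℕ → ℝ := fun i => i * (τ / N) with ha
    have ha0 : a 0 = 0 := by simp [ha]
    have haN : a N = τ := by
      rw [ha]
      field_simp
    have hNτ : ((N:ℝ)) * (τ / N) = τ := by field_simp
    have hamem : ∀ i : ℕ, i ≤ N → a i ∈ Set.Icc (0:ℝ) τ := by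
      intro i hi
      constructor
      · rw [ha]; positivity
      · show (i:ℝ) * (τ / N) ≤ τ
        calc (i:ℝ) * (τ / N) ≤ (N:ℝ) * (τ / N) :=
              mul_le_mul_of_nonneg_right (by exact_mod_cast hi) (by positivity)
          _ = τ := hNτ
    have hmono' : True := trivial
    have hmono : ∀ i : ℕ, a i ≤ a (i + 1) := by
      intro i
      show (i:ℝ) * (τ / N) ≤ ((i+1 : ℕ):ℝ) * (τ / N)
      apply mul_le_mul_of_nonneg_right _ (by positivity)
      push_cast; linarith
    -- chord bounds
    have hchord_int : ∀ i : ℕ, i < N →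
        ‖γ (a (i+1)) - γ (a i)‖ ≤ ∫ u in (a i)..(a (i+1)), ‖γ' u‖ := by
      intro i hi
      apply chord_le _ _ (hamem i (le_of_lt hi)).1 (hmono i) (hamem (i+1) hi).2
    have hpiece_small : ∀ i : ℕ, i < N →
        (∫ u in (a i)..(a (i+1)), ‖γ' u‖) ≤ 2 * r * δ := by
      intro i hi
      have hsub : Set.Icc (a i) (a (i+1)) ⊆ Set.Icc (0:ℝ) τ :=
        Set.Icc_subset_Icc (hamem i (le_of_lt hi)).1 (hamem (i+1) hi).2
      have hle : (∫ u in (a i)..(a (i+1)), ‖γ' u‖) ≤ ∫ _ in (a i)..(a (i+1)), M := by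
        apply intervalIntegral.integral_mono_on (hmono i)
        · apply ContinuousOn.intervalIntegrable
          rw [Set.uIcc_of_le (hmono i)]
          exact (hcont.mono hsub).norm
        · exact intervalIntegrable_const
        · intro u hu
          exact hM u (hsub hu)
      have hval : (∫ _ in (a i)..(a (i+1)), M) = (τ / N) * M := by
        rw [intervalIntegral.integral_const]
        have : a (i+1) - a i = τ / N := by rw [ha]; push_cast; ring
        rw [this, smul_eq_mul]
      rw [hval] at hle
      refine hle.trans ?_
      rw [div_mul_eq_mul_div, div_le_iff₀ hNpos]
      nlinarith [hn']
    -- triangle inequality by induction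
    have htri : ∀ m : ℕ, m ≤ N →
        angle (γ (a 0)) (γ (a m)) ≤ ∑ i ∈ Finset.range m, angle (γ (a i)) (γ (a (i+1))) := by
      intro m
      induction m with
      | zero =>
        intro _
        simp only [Finset.range_zero, Finset.sum_empty]
        rw [angle_self (hγne (a 0) (hamem 0 (Nat.zero_le N)))]
      | succ k ih =>
        intro hk
        have hk' : k ≤ N := Nat.le_of_succ_le hk
        calc angle (γ (a 0)) (γ (a (k+1)))
            ≤ angle (γ (a 0)) (γ (a k)) + angle (γ (a k)) (γ (a (k+1))) :=
              angle_triangle_aux (hγne _ (hamem 0 (Nat.zero_le N))) (hγne _ (hamem k hk'))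
                (hγne _ (hamem (k+1) hk))
          _ ≤ (∑ i ∈ Finset.range k, angle (γ (a i)) (γ (a (i+1))))
                + angle (γ (a k)) (γ (a (k+1))) := by
              linarith [ih hk']
          _ = ∑ i ∈ Finset.range (k+1), angle (γ (a i)) (γ (a (i+1))) := by
              rw [Finset.sum_range_succ]
    -- angle per piece
    have hpiece_angle : ∀ i : ℕ, i < N →
        r * angle (γ (a i)) (γ (a (i+1))) * Real.sqrt (1 - δ ^ 2)
          ≤ ∫ u in (a i)..(a (i+1)), ‖γ' u‖ := by
      intro i hi
      have h1 := angle_le_chord (E := E) hr (hsphere _ (hamem (i+1) hi))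
        (hsphere _ (hamem i (le_of_lt hi))) hδ0.le hδ1
        (le_trans (hchord_int i hi) (hpiece_small i hi))
      calc r * angle (γ (a i)) (γ (a (i+1))) * Real.sqrt (1 - δ ^ 2)
          = angle (γ (a (i+1))) (γ (a i)) * (r * Real.sqrt (1 - δ ^ 2)) := by
            rw [angle_comm]; ring
        _ ≤ ‖γ (a (i+1)) - γ (a i)‖ := h1
        _ ≤ _ := hchord_int i hi
    -- sum up
    have hsum : I = ∑ i ∈ Finset.range N, ∫ u in (a i)..(a (i+1)), ‖γ' u‖ := by
      rw [hI, ← ha0, ← haN]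
      symm
      apply intervalIntegral.sum_integral_adjacent_intervals
      intro k hk
      apply ContinuousOn.intervalIntegrable
      rw [Set.uIcc_of_le (hmono k)]
      refine ((hcont.mono (Set.Icc_subset_Icc (hamem k (le_of_lt hk)).1
        (hamem (k+1) hk).2)).norm)
    calc r * angle (γ 0) (γ τ) * Real.sqrt (1 - δ ^ 2)
        = r * angle (γ (a 0)) (γ (a N)) * Real.sqrt (1 - δ ^ 2) := by rw [ha0, haN]
      _ ≤ r * (∑ i ∈ Finset.range N, angle (γ (a i)) (γ (a (i+1)))) * Real.sqrt (1 - δ ^ 2) := by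
          apply mul_le_mul_of_nonneg_right _ (Real.sqrt_nonneg _)
          exact mul_le_mul_of_nonneg_left (htri N (le_refl N)) hr.le
      _ = ∑ i ∈ Finset.range N, r * angle (γ (a i)) (γ (a (i+1))) * Real.sqrt (1 - δ ^ 2) := by
          rw [Finset.mul_sum, Finset.sum_mul]
      _ ≤ ∑ i ∈ Finset.range N, ∫ u in (a i)..(a (i+1)), ‖γ' u‖ :=
          Finset.sum_le_sum (fun i hi => hpiece_angle i (Finset.mem_range.mp hi))
      _ = I := hsum.symm
  -- take the limit δ → 0
  have hlim : Filter.Tendsto (fun n : ℕ => r * angle (γ 0) (γ τ) * Real.sqrt (1 - (1/(n+2):ℝ) ^ 2))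
      Filter.atTop (nhds (r * angle (γ 0) (γ τ))) := by
    have h1 : Filter.Tendsto (fun n : ℕ => (1/(n+2):ℝ)) Filter.atTop (nhds 0) := by
      simp only [one_div]
      exact tendsto_inv_atTop_zero.comp
        (Filter.tendsto_atTop_add_const_right Filter.atTop 2 tendsto_natCast_atTop_atTop)
    have h2 : Filter.Tendsto (fun n : ℕ => Real.sqrt (1 - (1/(n+2):ℝ) ^ 2)) Filter.atTop
        (nhds 1) := by
      have : Filter.Tendsto (fun n : ℕ => (1 - (1/(n+2):ℝ) ^ 2)) Filter.atTop (nhds 1) := by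
        have := ((h1.pow 2).const_sub 1)
        simpa using this
      have := (Real.continuous_sqrt.tendsto 1).comp this
      rw [Real.sqrt_one] at this
      exact this
    have := (h2.const_mul (r * angle (γ 0) (γ τ)))
    simpa [mul_comm, mul_assoc] using this
  apply le_of_tendsto hlim
  apply Filter.Eventually.of_forall
  intro n
  apply key
  · positivity
  · rw [div_lt_one (by positivity)]
    have : (0:ℝ) ≤ (n:ℝ) := Nat.cast_nonneg n
    linarith
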